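/- Let k ≥ 1 and c ≥ 1 be integers and let p ∈ (0,1) with q = 1 - p. For z ∈ ℕ let ℓ(p, z) = k·c·log(1-p) + z · log(1 - (1-p)^k). Then ∑_{z=0}^∞ C(c+z-1, z) · (q^k)^c · (1-q^k)^z · (−∂²ℓ/∂p²)(p, z) = c k² / (q² (1 - q^k)), where ∂²ℓ/∂p² denotes the second derivative of ℓ(·, z) with respect to p. -/

import Mathlib

lemma nat_id (m j : ℕ) : (j+1) * (m+j+1).choose (j+1) = (m+1) * ((m+j+1).choose (m+1)) := by
  have h1 := Nat.add_one_mul_choose_eq (m+j) j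
  have h2 := Nat.add_one_mul_choose_eq (m+j) m
  have hsym : (m+j).choose j = (m+j).choose m := by
    rw [← Nat.choose_symm (Nat.le_add_right m j)]
    congr 1
    omega
  have e1 : (m+j+1).choose (j+1) * (j+1) = (m+j+1) * (m+j).choose j := by
    simpa [Nat.succ_eq_add_one] using h1.symm
  have e2 : (m+j+1).choose (m+1) * (m+1) = (m+j+1) * (m+j).choose m := by
    simpa [Nat.succ_eq_add_one] using h2.symm
  rw [mul_comm (j+1), mul_comm (m+1), e1, e2, hsym]

lemma negbin_hasSum (c : ℕ) (hc : 1 ≤ c) {x : ℝ} (hx : |x| < 1) :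
    HasSum (fun z : ℕ => ((c + z - 1).choose z : ℝ) * x ^ z) (1 / (1 - x) ^ c) := by
  obtain ⟨m, rfl⟩ : ∃ m, c = m + 1 := ⟨c - 1, by omega⟩
  have h := hasSum_choose_mul_geometric_of_norm_lt_one (𝕜 := ℝ) m (by simpa using hx)
  convert h using 2 with z
  · rfl
  congr 2
  rw [← Nat.choose_symm (Nat.le_add_left m z)]
  congr 1 <;> omega

lemma negbin_mean (c : ℕ) (hc : 1 ≤ c) {x : ℝ} (hx : |x| < 1) :
    HasSum (fun z : ℕ => (z : ℝ) * ((c + z - 1).choose z : ℝ) * x ^ z)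
      (c * x / (1 - x) ^ (c + 1)) := by
  obtain ⟨m, rfl⟩ : ∃ m, c = m + 1 := ⟨c - 1, by omega⟩
  have h := (hasSum_choose_mul_geometric_of_norm_lt_one (𝕜 := ℝ) (m+1)
    (by simpa using hx)).mul_left ((m+1 : ℝ) * x)
  have h2 : HasSum (fun j : ℕ =>
      ((j+1 : ℕ) : ℝ) * (((m+1) + (j+1) - 1).choose (j+1) : ℝ) * x ^ (j+1))
      ((m+1 : ℝ) * x * (1 / (1 - x) ^ (m + 1 + 1))) := by
    convert h using 2 with j
    · rfl
    have e1 : (m+1) + (j+1) - 1 = m + j + 1 := by omega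
    have e2 : j + (m+1) = m + j + 1 := by omega
    rw [e1, e2]
    have key : (((j+1) * (m+j+1).choose (j+1) : ℕ) : ℝ)
        = (((m+1) * ((m+j+1).choose (m+1)) : ℕ) : ℝ) := by
      exact_mod_cast congrArg Nat.cast (nat_id m j)
    push_cast at key ⊢
    linear_combination x ^ (j+1) * key
  have := (hasSum_nat_add_iff (f := fun z : ℕ =>
      (z : ℝ) * (((m+1) + z - 1).choose z : ℝ) * x ^ z) 1).1 h2
  simpa [div_eq_mul_inv] using this

open Real

lemma second_deriv (k c : ℕ) (hk : 1 ≤ k) (z : ℕ) (p : ℝ) (hp : p ∈ Set.Ioo (0:ℝ) 1) :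
    - iteratedDeriv 2
        (fun t : ℝ => k * c * Real.log (1 - t) + z * Real.log (1 - (1 - t) ^ k)) p
    = (k:ℝ)*c/(1-p)^2 + z * (((k:ℝ)*((k-1:ℕ):ℝ)*(1-p)^(k-1-1)*(1-(1-p)^k)
        + (k:ℝ)^2*((1-p)^(k-1))^2) / (1-(1-p)^k)^2) := by
  obtain ⟨hp0, hp1⟩ := hp
  set f : ℝ → ℝ := fun t => k * c * Real.log (1 - t) + z * Real.log (1 - (1 - t) ^ k) with hf
  set d1 : ℝ → ℝ := fun t =>
    -((k:ℝ)*c * (1-t)⁻¹) + z * ((k:ℝ) * (1-t)^(k-1) * (1-(1-t)^k)⁻¹) with hd1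
  -- basic facts for t ∈ Ioo 0 1
  have key : ∀ t ∈ Set.Ioo (0:ℝ) 1, HasDerivAt f (d1 t) t := by
    intro t ht
    obtain ⟨ht0, ht1⟩ := ht
    have hq0 : (0:ℝ) < 1 - t := by linarith
    have hqne : (1:ℝ) - t ≠ 0 := ne_of_gt hq0
    have hs1 : (1-t)^k < 1 := pow_lt_one₀ (le_of_lt hq0) (by linarith) (by omega)
    have hgpos : (0:ℝ) < 1 - (1-t)^k := by linarith
    have hgne : (1:ℝ) - (1-t)^k ≠ 0 := ne_of_gt hgpos
    have h1 : HasDerivAt (fun t : ℝ => 1 - t) (-1) t := (hasDerivAt_id t).const_sub 1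
    have hlog1 : HasDerivAt (fun t : ℝ => Real.log (1 - t)) ((1-t)⁻¹ * (-1)) t :=
      (Real.hasDerivAt_log hqne).comp t h1
    have hpow : HasDerivAt (fun t : ℝ => (1-t)^k) ((k:ℝ) * (1-t)^(k-1) * (-1)) t := h1.pow k
    have hg : HasDerivAt (fun t : ℝ => 1 - (1-t)^k) (-((k:ℝ) * (1-t)^(k-1) * (-1))) t :=
      hpow.const_sub 1
    have hlog2 : HasDerivAt (fun t : ℝ => Real.log (1 - (1-t)^k))
        ((1-(1-t)^k)⁻¹ * -((k:ℝ) * (1-t)^(k-1) * (-1))) t :=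
      by have := (Real.hasDerivAt_log hgne).comp t hg; exact this
    have := (hlog1.const_mul ((k:ℝ)*c)).add (hlog2.const_mul (z:ℝ))
    convert this using 1
    rotate_left 3
    simp only [hd1]
    ring
    all_goals rfl
  have hq0 : (0:ℝ) < 1 - p := by linarith
  have hqne : (1:ℝ) - p ≠ 0 := ne_of_gt hq0
  have hs1 : (1-p)^k < 1 := pow_lt_one₀ (le_of_lt hq0) (by linarith) (by omega)
  have hgpos : (0:ℝ) < 1 - (1-p)^k := by linarith
  have hgne : (1:ℝ) - (1-p)^k ≠ 0 := ne_of_gt hgpos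
  -- derivative of d1 at p
  have h1 : HasDerivAt (fun t : ℝ => 1 - t) (-1) p := (hasDerivAt_id p).const_sub 1
  have hA : HasDerivAt (fun t : ℝ => (1-t)⁻¹) (-(-1) / (1-p)^2) p := h1.inv hqne
  have hu : HasDerivAt (fun t : ℝ => (1-t)^(k-1))
      (((k-1:ℕ):ℝ) * (1-p)^(k-1-1) * (-1)) p := h1.pow (k-1)
  have hgd : HasDerivAt (fun t : ℝ => 1 - (1-t)^k) (-((k:ℝ) * (1-p)^(k-1) * (-1))) p :=
    (h1.pow k).const_sub 1
  have hv : HasDerivAt (fun t : ℝ => (1-(1-t)^k)⁻¹)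
      (-(-((k:ℝ) * (1-p)^(k-1) * (-1))) / (1-(1-p)^k)^2) p := hgd.inv hgne
  have hd1' : HasDerivAt d1
      (-((k:ℝ)*c * (-(-1) / (1-p)^2))
        + z * ((k:ℝ) * ((((k-1:ℕ):ℝ) * (1-p)^(k-1-1) * (-1)) * (1-(1-p)^k)⁻¹
            + (1-p)^(k-1) * (-(-((k:ℝ) * (1-p)^(k-1) * (-1))) / (1-(1-p)^k)^2)))) p := by
    have base := ((hA.const_mul ((k:ℝ)*c)).neg).add
      (((hu.mul hv).const_mul (k:ℝ)).const_mul (z:ℝ))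
    convert base using 1
    case e'_8 =>
      funext t
      simp only [hd1, Pi.add_apply, Pi.neg_apply, Pi.mul_apply]
      ring
    all_goals rfl
  -- iteratedDeriv
  have heq : deriv f =ᶠ[nhds p] d1 := by
    filter_upwards [isOpen_Ioo.mem_nhds ⟨hp0, hp1⟩] with t ht
    exact (key t ht).deriv
  have : iteratedDeriv 2 f p = deriv d1 p := by
    rw [iteratedDeriv_succ, iteratedDeriv_one]
    exact heq.deriv_eq
  rw [this, hd1'.deriv]
  field_simp
  ring

/-- Fisher information under model (c):
E[-∂²ℓ/∂p²] = c k²/(q²(1-q^k)), where q = 1 - p and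
ℓ(p,z) = k·c·log(1-p) + z·log(1-(1-p)^k). -/
theorem stmt_14 (k c : ℕ) (hk : 1 ≤ k) (hc : 1 ≤ c) (p : ℝ)
    (hp : p ∈ Set.Ioo (0 : ℝ) 1) :
    HasSum (fun z : ℕ =>
      ((c + z - 1).choose z : ℝ) * ((1 - p) ^ k) ^ c * (1 - (1 - p) ^ k) ^ z *
        (- iteratedDeriv 2
            (fun t : ℝ => k * c * Real.log (1 - t) + z * Real.log (1 - (1 - t) ^ k)) p))
      ((c : ℝ) * k ^ 2 / ((1 - p) ^ 2 * (1 - (1 - p) ^ k))) := by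
  obtain ⟨hp0, hp1⟩ := hp
  have hq0 : (0:ℝ) < 1 - p := by linarith
  have hqne : (1:ℝ) - p ≠ 0 := ne_of_gt hq0
  have hs0 : (0:ℝ) < (1-p)^k := pow_pos hq0 k
  have hs1 : (1-p)^k < 1 := pow_lt_one₀ (le_of_lt hq0) (by linarith) (by omega)
  set s : ℝ := (1-p)^k with hs
  set x : ℝ := 1 - s with hxdef
  have hx0 : 0 < x := by simp [hxdef]; linarith
  have hx1 : x < 1 := by simp [hxdef]; linarith
  have hxlt : |x| < 1 := abs_lt.2 ⟨by linarith, hx1⟩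
  have h1x : (1:ℝ) - x = s := by simp [hxdef]
  set C1 : ℝ := (k:ℝ)*c/(1-p)^2 with hC1
  set C2 : ℝ := ((k:ℝ)*((k-1:ℕ):ℝ)*(1-p)^(k-1-1)*(1-(1-p)^k)
        + (k:ℝ)^2*((1-p)^(k-1))^2) / (1-(1-p)^k)^2 with hC2
  have hw := negbin_hasSum c hc hxlt
  have hm := negbin_mean c hc hxlt
  have H := (hw.mul_left (s^c * C1)).add (hm.mul_left (s^c * C2))
  have hfun : (fun z : ℕ =>
      ((c + z - 1).choose z : ℝ) * ((1 - p) ^ k) ^ c * (1 - (1 - p) ^ k) ^ z *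
        (- iteratedDeriv 2
            (fun t : ℝ => k * c * Real.log (1 - t) + z * Real.log (1 - (1 - t) ^ k)) p))
      = fun z : ℕ => s^c * C1 * (((c + z - 1).choose z : ℝ) * x ^ z)
          + s^c * C2 * ((z : ℝ) * ((c + z - 1).choose z : ℝ) * x ^ z) := by
    funext z
    rw [second_deriv k c hk z p ⟨hp0, hp1⟩]
    simp only [← hs, ← hxdef, ← hC1, ← hC2]
    ring
  rw [hfun]
  convert H using 1
  · rfl
  rw [h1x, hC1, hC2]
  simp only [← hs, ← hxdef]
  have hsne : s ≠ 0 := ne_of_gt hs0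
  have hxne : x ≠ 0 := ne_of_gt hx0
  rcases Nat.lt_or_ge k 2 with hk2 | hk2
  · -- k = 1
    obtain rfl : k = 1 := by omega
    simp only [hxdef, hs] at *
    norm_num
    field_simp
    ring
  · -- k ≥ 2
    obtain ⟨m, rfl⟩ : ∃ m, k = m + 2 := ⟨k - 2, by omega⟩
    simp only [hxdef, hs] at *
    have e1 : m + 2 - 1 = m + 1 := by omega
    have e2 : m + 1 - 1 = m := by omega
    rw [e1, e2]
    push_cast
    field_simp
    ring
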